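/- For every non-negative integer n and non-negative integer r, the value sum_{k=0}^{n} (-1)^k * k!/(k+1) * S_r(n+r, k+r) is a polynomial in r of degree n with rational coefficients, namely the Bernoulli polynomial B_n(r); in particular for r = 0 it reduces to the Bernoulli number B_n. -/

import Mathlib

open Finset Real

/-- Stirling numbers of the second kind `S(n, k)`. -/
def stirling2 : ℕ → ℕ → ℕ
  | 0, 0 => 1
  | 0, _ + 1 => 0
  | _ + 1, 0 => 0
  | n + 1, k + 1 => (k + 1) * stirling2 n (k + 1) + stirling2 n k

/-- The `r`-Stirling numbers of the second kind `S_r(n, k)` of Broder: the number of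
partitions of `{1, …, n}` into `k` non-empty subsets such that `1, …, r` lie in
distinct subsets (with the convention `S_r(n, k) = 0` for `n < r`). -/
def rStirling (r : ℕ) : ℕ → ℕ → ℕ
  | 0, k => if r = 0 ∧ k = 0 then 1 else 0
  | n + 1, k =>
    if n + 1 < r then 0
    else if n + 1 = r then (if k = r then 1 else 0)
    else
      match k with
      | 0 => 0
      | k + 1 => (k + 1) * rStirling r n (k + 1) + rStirling r n k


lemma stirling2_zero_right : ∀ n, stirling2 (n+1) 0 = 0 := fun _ => rfl

lemma stirling2_zero_succ (k : ℕ) : stirling2 0 (k+1) = 0 := rfl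

lemma stirling2_succ (n k : ℕ) :
    stirling2 (n+1) (k+1) = (k + 1) * stirling2 n (k + 1) + stirling2 n k := rfl

lemma stirling2_eq_zero : ∀ n k, n < k → stirling2 n k = 0
  | 0, 0, h => absurd h (lt_irrefl 0)
  | 0, _+1, _ => rfl
  | n+1, 0, h => by omega
  | n+1, k+1, h => by
    rw [stirling2_succ, stirling2_eq_zero n (k+1) (by omega),
      stirling2_eq_zero n k (by omega)]
    ring

lemma stirling2_zero_zero : stirling2 0 0 = 1 := rfl

/-- key identity: ∑_{m ≤ n} C(n,m) S(m,k) = S(n+1,k+1) -/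
lemma sum_choose_stirling2 : ∀ n k,
    ∑ m ∈ range (n+1), n.choose m * stirling2 m k = stirling2 (n+1) (k+1)
  | 0, k => by
    cases k <;> simp [stirling2_succ, stirling2_zero_succ, stirling2_zero_zero]
  | n+1, k => by
    rw [Finset.sum_range_succ' (fun m => (n+1).choose m * stirling2 m k)]
    simp only [Nat.choose_succ_succ, add_mul, Finset.sum_add_distrib, Nat.choose_zero_right,
      one_mul, Nat.succ_eq_add_one]
    have h2 : (∑ i ∈ range (n+1), n.choose (i+1) * stirling2 (i+1) k) + stirling2 0 k
        = ∑ m ∈ range (n+2), n.choose m * stirling2 m k := by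
      rw [Finset.sum_range_succ' (fun m => n.choose m * stirling2 m k)]
      simp
    have h3 : ∑ m ∈ range (n+2), n.choose m * stirling2 m k
        = ∑ m ∈ range (n+1), n.choose m * stirling2 m k := by
      rw [Finset.sum_range_succ, Nat.choose_succ_self, zero_mul, add_zero]
    have h4 := sum_choose_stirling2 n k
    have key : (∑ i ∈ range (n+1), n.choose i * stirling2 (i+1) k) + stirling2 (n+1) (k+1)
        = stirling2 (n+1+1) (k+1) := by
      cases k with
      | zero =>
        have : ∀ i ∈ range (n+1), n.choose i * stirling2 (i+1) 0 = 0 := by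
          intro i _; rw [stirling2_zero_right]; ring
        rw [Finset.sum_eq_zero this, zero_add, stirling2_succ (n+1) 0, stirling2_zero_right]
        ring
      | succ j =>
        have e1 : ∀ i ∈ range (n+1), n.choose i * stirling2 (i+1) (j+1)
            = (j+1) * (n.choose i * stirling2 i (j+1)) + n.choose i * stirling2 i j := by
          intro i _; rw [stirling2_succ]; ring
        rw [Finset.sum_congr rfl e1, Finset.sum_add_distrib, ← Finset.mul_sum,
          sum_choose_stirling2 n (j+1), sum_choose_stirling2 n j, stirling2_succ (n+1) (j+1)]
        ring
    omega

/-- telescoping sum -/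
lemma sum_U (n : ℕ) :
    ∑ k ∈ range (n+1), (-1:ℚ)^k * (Nat.factorial k) * stirling2 n (k+1)
      = if n = 1 then 1 else 0 := by
  cases n with
  | zero => simp [stirling2_eq_zero 0 1 (by omega)]
  | succ m =>
    have e1 : ∀ k ∈ range (m+2), (-1:ℚ)^k * (Nat.factorial k) * stirling2 (m+1) (k+1)
        = (-1:ℚ)^k * (Nat.factorial (k+1)) * stirling2 m (k+1)
          + (-1:ℚ)^k * (Nat.factorial k) * stirling2 m k := by
      intro k _
      rw [stirling2_succ m k]
      push_cast [Nat.factorial_succ]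
      ring
    rw [Finset.sum_congr rfl e1, Finset.sum_add_distrib]
    have e2 : ∑ k ∈ range (m+2), (-1:ℚ)^k * (Nat.factorial (k+1)) * stirling2 m (k+1)
        = ∑ k ∈ range (m+1), (-1:ℚ)^k * (Nat.factorial (k+1)) * stirling2 m (k+1) := by
      rw [Finset.sum_range_succ, stirling2_eq_zero m (m+2) (by omega)]
      simp
    have e3 : ∑ k ∈ range (m+2), (-1:ℚ)^k * (Nat.factorial k) * stirling2 m k
        = (∑ i ∈ range (m+1), (-1:ℚ)^(i+1) * (Nat.factorial (i+1)) * stirling2 m (i+1))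
          + stirling2 m 0 := by
      rw [Finset.sum_range_succ' (fun k => (-1:ℚ)^k * (Nat.factorial k) * stirling2 m k)]
      norm_num
    have e4 : ∀ i ∈ range (m+1), (-1:ℚ)^(i+1) * (Nat.factorial (i+1)) * stirling2 m (i+1)
        = -((-1:ℚ)^i * (Nat.factorial (i+1)) * stirling2 m (i+1)) := by
      intro i _; ring
    rw [e2, e3, Finset.sum_congr rfl e4, Finset.sum_neg_distrib]
    have e5 : (stirling2 m 0 : ℚ) = if m + 1 = 1 then 1 else 0 := by
      cases m with
      | zero => norm_num [stirling2]
      | succ l => simp [show stirling2 (l+1) 0 = 0 from rfl]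
    rw [e5]; ring

noncomputable def T (n : ℕ) : ℚ :=
  ∑ k ∈ range (n+1), (-1:ℚ)^k * (Nat.factorial k) / (k+1) * stirling2 n k

lemma T_ext (m N : ℕ) (h : m ≤ N) :
    T m = ∑ k ∈ range (N+1), (-1:ℚ)^k * (Nat.factorial k) / (k+1) * stirling2 m k := by
  rw [T]
  apply Finset.sum_subset
  · exact Finset.range_subset_range.2 (by omega)
  · intro k _ hk
    rw [stirling2_eq_zero m k (by simp at hk ⊢; omega)]
    simp

lemma sum_choose_T (n : ℕ) :
    ∑ m ∈ range (n+1), ((n.choose m : ℚ)) * T m = (if n = 1 then 1 else 0) + T n := by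
  have swap : ∑ m ∈ range (n+1), ((n.choose m : ℚ)) * T m
      = ∑ k ∈ range (n+1), (-1:ℚ)^k * (Nat.factorial k) / (k+1) * stirling2 (n+1) (k+1) := by
    have e : ∀ m ∈ range (n+1), ((n.choose m : ℚ)) * T m
        = ∑ k ∈ range (n+1), (-1:ℚ)^k * (Nat.factorial k) / (k+1)
            * ((n.choose m : ℚ) * stirling2 m k) := by
      intro m hm
      rw [T_ext m n (by simp at hm; omega), Finset.mul_sum]
      exact Finset.sum_congr rfl fun k _ => by ring
    rw [Finset.sum_congr rfl e, Finset.sum_comm]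
    refine Finset.sum_congr rfl fun k _ => ?_
    rw [← Finset.mul_sum]
    congr 1
    push_cast [← sum_choose_stirling2 n k]
    norm_num
  have split : ∀ k ∈ range (n+1), (-1:ℚ)^k * (Nat.factorial k) / (k+1) * stirling2 (n+1) (k+1)
      = (-1:ℚ)^k * (Nat.factorial k) * stirling2 n (k+1)
        + (-1:ℚ)^k * (Nat.factorial k) / (k+1) * stirling2 n k := by
    intro k _
    rw [stirling2_succ n k]
    have hk : ((k:ℚ)+1) ≠ 0 := by positivity
    push_cast
    field_simp
  rw [swap, Finset.sum_congr rfl split, Finset.sum_add_distrib, sum_U n, T]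

lemma T_eq_bernoulli (n : ℕ) : T n = bernoulli n := by
  induction n using Nat.strong_induction_on with
  | _ n ih =>
    have h1 := sum_choose_T (n+1)
    rw [Finset.sum_range_succ, Nat.choose_self] at h1
    have hif : (if n+1=1 then (1:ℚ) else 0) = (if n=0 then 1 else 0) := by
      by_cases h : n = 0 <;> simp [h]
    have h3 : ∑ m ∈ range (n+1), (((n+1).choose m : ℚ)) * T m = if n + 1 = 1 then 1 else 0 := by
      rw [hif]
      push_cast at h1
      linarith [h1]
    have h2 := sum_bernoulli (n+1)
    rw [Finset.sum_range_succ] at h3 h2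
    have h4 : ∑ m ∈ range n, (((n+1).choose m : ℚ)) * T m
        = ∑ m ∈ range n, (((n+1).choose m : ℚ)) * bernoulli m :=
      Finset.sum_congr rfl fun m hm => by rw [ih m (by simp at hm; omega)]
    rw [h4] at h3
    have h5 : (((n+1).choose n : ℚ)) * T n = (((n+1).choose n : ℚ)) * bernoulli n := by
      linarith [h3, h2]
    have h6 : (((n+1).choose n : ℚ)) ≠ 0 := by
      rw [Nat.choose_succ_self_right]; positivity
    exact mul_left_cancel₀ h6 h5

lemma rStirling_zero (r k : ℕ) : rStirling r 0 k = if r = 0 ∧ k = 0 then 1 else 0 := rfl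

lemma rStirling_succ_eq (r n k : ℕ) (h1 : ¬ n + 1 < r) (h2 : n + 1 = r) :
    rStirling r (n+1) k = if k = r then 1 else 0 := by
  simp [rStirling, h1, h2]

lemma rStirling_succ_zero (r n : ℕ) (h1 : ¬ n + 1 < r) (h2 : n + 1 ≠ r) :
    rStirling r (n+1) 0 = 0 := by
  simp [rStirling, h1, h2]

lemma rStirling_succ_succ (r n k : ℕ) (h1 : ¬ n + 1 < r) (h2 : n + 1 ≠ r) :
    rStirling r (n+1) (k+1) = (k+1) * rStirling r n (k+1) + rStirling r n k := by
  simp [rStirling, h1, h2]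

lemma rStirling_eq_zero_of_lt (r : ℕ) : ∀ m j, j < r → rStirling r m j = 0
  | 0, j, h => by rw [rStirling_zero]; simp; omega
  | m+1, j, h => by
    by_cases h1 : m + 1 < r
    · simp [rStirling, h1]
    by_cases h2 : m + 1 = r
    · rw [rStirling_succ_eq r m j h1 h2, if_neg (by omega)]
    cases j with
    | zero => exact rStirling_succ_zero r m h1 h2
    | succ i =>
      rw [rStirling_succ_succ r m i h1 h2,
        rStirling_eq_zero_of_lt r m (i+1) h, rStirling_eq_zero_of_lt r m i (by omega)]
      ring


lemma sum_helper_k0 (r n : ℕ) :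
    ∑ j ∈ range (n+1), n.choose j * r^(n-j) * stirling2 j 0 = r^n := by
  rw [Finset.sum_eq_single_of_mem 0 (by simp)]
  · simp [show stirling2 0 0 = 1 from rfl]
  · intro j _ hj
    obtain ⟨i, rfl⟩ := Nat.exists_eq_succ_of_ne_zero hj
    simp [show stirling2 (i+1) 0 = 0 from rfl]

lemma rStirling_reduce (r : ℕ) : ∀ n k,
    rStirling r (n+r) (k+r) = ∑ j ∈ range (n+1), n.choose j * r^(n-j) * stirling2 j k
  | 0, k => by
    have hrhs : ∑ j ∈ range 1, (Nat.choose 0 j) * r^(0-j) * stirling2 j k = stirling2 0 k := by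
      simp
    rw [zero_add, hrhs]
    cases r with
    | zero => cases k <;> simp [rStirling_zero, stirling2]
    | succ s =>
      show rStirling (s+1) (s+1) (k+s+1) = stirling2 0 k
      rw [rStirling_succ_eq (s+1) s (k+s+1) (by omega) rfl]
      cases k with
      | zero => simp [show stirling2 0 0 = 1 from rfl]
      | succ i => rw [if_neg (by omega), show stirling2 0 (i+1) = 0 from rfl]
  | n+1, k => by
    have h1 : ¬ (n + r + 1 < r) := by omega
    have h2 : n + r + 1 ≠ r := by omega
    have c1 : ∑ x ∈ range (n+1), n.choose x * r^(n+1-(x+1)) * stirling2 (x+1) k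
        = ∑ x ∈ range (n+1), n.choose x * r^(n-x) * stirling2 (x+1) k :=
      Finset.sum_congr rfl fun x _ => by rw [show n+1-(x+1) = n-x by omega]
    have c2 : ∑ x ∈ range (n+1), n.choose (x+1) * r^(n+1-(x+1)) * stirling2 (x+1) k
        = ∑ x ∈ range (n+1), n.choose (x+1) * r^(n-x) * stirling2 (x+1) k :=
      Finset.sum_congr rfl fun x _ => by rw [show n+1-(x+1) = n-x by omega]
    have hA : ∑ j ∈ range (n+2), (n+1).choose j * r^(n+1-j) * stirling2 j k
        = (∑ i ∈ range (n+1), n.choose i * r^(n-i) * stirling2 (i+1) k)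
          + ((∑ i ∈ range (n+1), n.choose (i+1) * r^(n-i) * stirling2 (i+1) k)
          + r^(n+1) * stirling2 0 k) := by
      rw [Finset.sum_range_succ' (fun j => (n+1).choose j * r^(n+1-j) * stirling2 j k)]
      simp only [Nat.choose_succ_succ, add_mul, Finset.sum_add_distrib, Nat.choose_zero_right,
        one_mul, Nat.succ_eq_add_one, Nat.sub_zero]
      rw [c1, c2]
      ring
    have e1 : (∑ i ∈ range (n+1), n.choose (i+1) * r^(n-i) * stirling2 (i+1) k)
          + r^(n+1) * stirling2 0 k
        = ∑ j ∈ range (n+2), n.choose j * r^(n+1-j) * stirling2 j k := by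
      rw [Finset.sum_range_succ' (fun j => n.choose j * r^(n+1-j) * stirling2 j k), c2]
      simp
    have e3 : ∑ j ∈ range (n+2), n.choose j * r^(n+1-j) * stirling2 j k
        = ∑ j ∈ range (n+1), n.choose j * r^(n+1-j) * stirling2 j k := by
      rw [Finset.sum_range_succ, Nat.choose_succ_self]
      simp
    have e4 : ∑ j ∈ range (n+1), n.choose j * r^(n+1-j) * stirling2 j k
        = r * ∑ j ∈ range (n+1), n.choose j * r^(n-j) * stirling2 j k := by
      rw [Finset.mul_sum]
      refine Finset.sum_congr rfl fun j hj => ?_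
      rw [show n+1-j = (n-j)+1 by simp at hj; omega, pow_succ]
      ring
    have hB : (∑ i ∈ range (n+1), n.choose (i+1) * r^(n-i) * stirling2 (i+1) k)
          + r^(n+1) * stirling2 0 k
        = r * ∑ j ∈ range (n+1), n.choose j * r^(n-j) * stirling2 j k := by
      rw [e1, e3, e4]
    rw [hA, hB]
    cases k with
    | zero =>
      have hsum0 : ∑ i ∈ range (n+1), n.choose i * r^(n-i) * stirling2 (i+1) 0 = 0 :=
        Finset.sum_eq_zero fun i _ => by simp [show stirling2 (i+1) 0 = 0 from rfl]
      rw [hsum0, zero_add, zero_add, sum_helper_k0 r n]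
      cases r with
      | zero => simpa using rStirling_succ_zero 0 n (by omega) (by omega)
      | succ s =>
        rw [show n+1+(s+1) = (n+(s+1))+1 by omega]
        rw [rStirling_succ_succ (s+1) (n+(s+1)) s (by omega) (by omega),
          rStirling_eq_zero_of_lt (s+1) (n+(s+1)) s (by omega), add_zero]
        have ih0 := rStirling_reduce (s+1) n 0
        rw [zero_add, sum_helper_k0 (s+1) n] at ih0
        rw [ih0]
    | succ i =>
      have e2 : ∑ m ∈ range (n+1), n.choose m * r^(n-m) * stirling2 (m+1) (i+1)
          = (∑ m ∈ range (n+1), (i+1) * (n.choose m * r^(n-m) * stirling2 m (i+1)))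
            + ∑ m ∈ range (n+1), n.choose m * r^(n-m) * stirling2 m i := by
        rw [← Finset.sum_add_distrib]
        refine Finset.sum_congr rfl fun m _ => ?_
        rw [stirling2_succ]
        ring
      have LHS : rStirling r (n+1+r) (i+1+r)
          = (i+1+r) * rStirling r (n+r) (i+1+r) + rStirling r (n+r) (i+r) := by
        rw [show n+1+r = (n+r)+1 by omega, show i+1+r = (i+r)+1 by omega,
          rStirling_succ_succ r (n+r) (i+r) h1 h2]
      rw [LHS, rStirling_reduce r n (i+1), rStirling_reduce r n i, e2, ← Finset.mul_sum]
      ring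


lemma bernoulli_poly_degree (n : ℕ) : (Polynomial.bernoulli n).degree = n := by
  have hle : (Polynomial.bernoulli n).degree ≤ n := by
    rw [Polynomial.bernoulli]
    refine (Polynomial.degree_sum_le _ _).trans ?_
    apply Finset.sup_le
    intro i hi
    exact (Polynomial.degree_monomial_le _ _).trans (by
      simp only [Nat.cast_le]; omega)
  have hco : (Polynomial.bernoulli n).coeff n = 1 := by
    rw [Polynomial.bernoulli, Polynomial.finset_sum_coeff]
    rw [Finset.sum_eq_single_of_mem 0 (by simp)]
    · simp
    · intro i hi hne
      rw [Polynomial.coeff_monomial, if_neg (by simp at hi; omega)]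
  exact le_antisymm hle (Polynomial.le_degree_of_ne_zero (by rw [hco]; norm_num))

lemma main_eval (n : ℕ) (r : ℕ) :
    (∑ k ∈ Finset.range (n + 1),
        (-1 : ℚ) ^ k * (Nat.factorial k : ℚ) / (k + 1) * rStirling r (n + r) (k + r)) =
      (Polynomial.bernoulli n).eval (r : ℚ) := by
  have step1 : ∀ k ∈ range (n+1),
      (-1 : ℚ) ^ k * (Nat.factorial k : ℚ) / (k + 1) * rStirling r (n + r) (k + r)
        = ∑ j ∈ range (n+1), ((n.choose j : ℚ)) * (r:ℚ)^(n-j)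
            * ((-1 : ℚ) ^ k * (Nat.factorial k : ℚ) / (k + 1) * stirling2 j k) := by
    intro k _
    rw [rStirling_reduce r n k]
    push_cast
    rw [Finset.mul_sum]
    exact Finset.sum_congr rfl fun j _ => by ring
  rw [Finset.sum_congr rfl step1, Finset.sum_comm]
  have step2 : ∀ j ∈ range (n+1),
      (∑ k ∈ range (n+1), ((n.choose j : ℚ)) * (r:ℚ)^(n-j)
          * ((-1 : ℚ) ^ k * (Nat.factorial k : ℚ) / (k + 1) * stirling2 j k))
        = ((n.choose j : ℚ)) * (r:ℚ)^(n-j) * bernoulli j := by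
    intro j hj
    rw [← Finset.mul_sum, ← T_ext j n (by simp at hj; omega), T_eq_bernoulli j]
  rw [Finset.sum_congr rfl step2, Polynomial.bernoulli, Polynomial.eval_finset_sum]
  exact Finset.sum_congr rfl fun j _ => by rw [Polynomial.eval_monomial]; ring

theorem sum_rStirling_is_bernoulli_poly (n : ℕ) :
    (Polynomial.bernoulli n).degree = n ∧
      (∀ r : ℕ,
        (∑ k ∈ Finset.range (n + 1),
            (-1 : ℚ) ^ k * (Nat.factorial k : ℚ) / (k + 1) * rStirling r (n + r) (k + r)) =
          (Polynomial.bernoulli n).eval (r : ℚ)) ∧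
      (∑ k ∈ Finset.range (n + 1),
          (-1 : ℚ) ^ k * (Nat.factorial k : ℚ) / (k + 1) * rStirling 0 n k) = bernoulli n := by
  refine ⟨bernoulli_poly_degree n, fun r => main_eval n r, ?_⟩
  have h := main_eval n 0
  simpa using h
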